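/- For any BAN F: B^n → B^n with the simple sequential update schedule W = ({0},{1},...,{n-1}), the chromatic number of the INECC graph satisfies χ(G_INECC(F,W)) ≤ 2^{2n/3+2}. -/

import Mathlib

/-- A configuration of a Boolean automata network of size `n`. -/
abbrev Conf (n : ℕ) := Fin n → Bool

/-- `F_I`: update simultaneously exactly the automata in `I`. -/
def updSet {n : ℕ} (F : Conf n → Conf n) (I : Finset (Fin n)) (x : Conf n) : Conf n :=
  fun i => if i ∈ I then F x i else x i

/-- `W_{<j}`: union of the first `j` blocks of the schedule `W`. -/
def prefUnion {n : ℕ} (W : List (Finset (Fin n))) (j : ℕ) : Finset (Fin n) :=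
  (W.take j).foldr (· ∪ ·) ∅

/-- `W` is a block-sequential update schedule: an ordered partition of the automata. -/
def isSchedule {n : ℕ} (W : List (Finset (Fin n))) : Prop :=
  (∀ B ∈ W, B.Nonempty) ∧ W.Pairwise Disjoint ∧ W.foldr (· ∪ ·) ∅ = Finset.univ

/-- Confusable configurations: identical after updating the first `i` blocks, some `i ∈ [0,p]`. -/
def confusable {n : ℕ} (F : Conf n → Conf n) (W : List (Finset (Fin n))) (x x' : Conf n) : Prop :=
  ∃ i ≤ W.length, updSet F (prefUnion W i) x = updSet F (prefUnion W i) x'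

/-- `CC(x,x')`: the set of steps making `x` and `x'` confusable. -/
def CCset {n : ℕ} (F : Conf n → Conf n) (W : List (Finset (Fin n))) (x x' : Conf n) : Set ℕ :=
  {i | i ≤ W.length ∧ updSet F (prefUnion W i) x = updSet F (prefUnion W i) x'}

/-- The `G_NECC` graph: edges between non-equivalent confusable configurations. -/
def gnecc {n : ℕ} (F : Conf n → Conf n) (W : List (Finset (Fin n))) :
    SimpleGraph (Conf n) where
  Adj x x' := F x ≠ F x' ∧ confusable F W x x'
  symm := by
    constructor
    rintro x x' ⟨hne, i, hi, h⟩
    exact ⟨hne.symm, i, hi, h.symm⟩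
  loopless := by constructor; rintro x ⟨hne, _⟩; exact hne rfl

/-- `F^W`: apply the blocks of `W` sequentially. -/
def runSched {n : ℕ} (F : Conf n → Conf n) (W : List (Finset (Fin n))) (x : Conf n) : Conf n :=
  W.foldl (fun y B => updSet F B y) x

/-- `W(i)`: the index of the block of `W` containing `i`. -/
def stepOf {n : ℕ} (W : List (Finset (Fin n))) (i : Fin n) : ℕ :=
  W.findIdx (fun B => decide (i ∈ B))

/-- `W' ∈ E_h(W,V')`: `W'` extends `W`, preserving the update order via `h`. -/
def extendsSched {n m : ℕ} (W : List (Finset (Fin n))) (W' : List (Finset (Fin m)))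
    (h : Fin n → Fin m) : Prop :=
  ∀ i i' : Fin n, (stepOf W i ≤ stepOf W i' ↔ stepOf W' (h i) ≤ stepOf W' (h i'))

/-- `(F',W')` `h`-simulates `(F,[V])`: `φ_h ∘ F'^{W'} = F ∘ φ_h`. -/
def simulates {n m : ℕ} (F' : Conf m → Conf m) (W' : List (Finset (Fin m)))
    (F : Conf n → Conf n) (h : Fin n → Fin m) : Prop :=
  ∀ z : Conf m, (fun i => runSched F' W' z (h i)) = F (fun i => z (h i))

/-- `κ(F,W)`: minimal number of additional automata needed to simulate `(F,[V])`
with a schedule extending `W` order-preservingly. -/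
noncomputable def kappa {n : ℕ} (F : Conf n → Conf n) (W : List (Finset (Fin n))) : ℕ :=
  sInf {k | ∃ h : Fin n → Fin (n + k), Function.Injective h ∧
    ∃ W' : List (Finset (Fin (n + k))), isSchedule W' ∧ extendsSched W W' h ∧
      ∃ F' : Conf (n + k) → Conf (n + k), simulates F' W' F h}

/-- The simple sequential update schedule `({0},{1},…,{n-1})`. -/
def seqSched (n : ℕ) : List (Finset (Fin n)) := (List.finRange n).map (fun i => {i})

/-- The `G_INECC` graph: the quotient of `G_NECC` identifying configurations
with the same image; vertices are the images of `F`. -/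
def ginecc {n : ℕ} (F : Conf n → Conf n) (W : List (Finset (Fin n))) :
    SimpleGraph {y : Conf n // ∃ x, F x = y} where
  Adj y y' := ∃ x x', F x = y.1 ∧ F x' = y'.1 ∧ (gnecc F W).Adj x x'
  symm := by
    constructor
    rintro y y' ⟨x, x', h1, h2, h3⟩
    exact ⟨x', x, h2, h1, h3.symm⟩
  loopless := by
    constructor
    rintro y ⟨x, x', h1, h2, h3⟩
    exact h3.1 (h1.trans h2.symm)

section Aux

open Finset

/-- membership in a foldr of unions -/
lemma mem_foldr_union {n : ℕ} (L : List (Finset (Fin n))) (j : Fin n) :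
    j ∈ L.foldr (· ∪ ·) ∅ ↔ ∃ B ∈ L, j ∈ B := by
  induction L with
  | nil => simp
  | cons B L ih => simp [ih]

lemma mem_prefUnion_seq {n : ℕ} (i : ℕ) (j : Fin n) :
    j ∈ prefUnion (seqSched n) i ↔ (j : ℕ) < i := by
  rw [prefUnion, mem_foldr_union, seqSched, ← List.map_take]
  constructor
  · rintro ⟨B, hB, hj⟩
    obtain ⟨j', hj', rfl⟩ := List.mem_map.1 hB
    simp only [Finset.mem_singleton] at hj; subst hj
    obtain ⟨k, hk, hkj⟩ := List.mem_take_iff_getElem.1 hj'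
    simp [List.getElem_finRange, Fin.ext_iff] at hkj hk
    omega
  · intro h
    refine ⟨{j}, List.mem_map.2 ⟨j, ?_, rfl⟩, by simp⟩
    exact List.mem_take_iff_getElem.2
      ⟨(j : ℕ), by simp; omega, by simp [List.getElem_finRange]⟩

lemma seqSched_length (n : ℕ) : (seqSched n).length = n := by simp [seqSched]

/-- unfolding of confusability at step `i` for the sequential schedule -/
lemma updSet_seq_eq_iff {n : ℕ} (F : Conf n → Conf n) (i : ℕ) (x x' : Conf n) :
    updSet F (prefUnion (seqSched n) i) x = updSet F (prefUnion (seqSched n) i) x' ↔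
      (∀ j : Fin n, (j : ℕ) < i → F x j = F x' j) ∧
      (∀ j : Fin n, ¬ (j : ℕ) < i → x j = x' j) := by
  constructor
  · intro h
    constructor
    · intro j hj
      have := congrFun h j
      simpa [updSet, mem_prefUnion_seq, hj] using this
    · intro j hj
      have := congrFun h j
      simpa [updSet, mem_prefUnion_seq, hj] using this
  · rintro ⟨h1, h2⟩
    funext j
    by_cases hj : (j : ℕ) < i <;>
      simp [updSet, mem_prefUnion_seq, hj, h1 j, h2 j]

/-- greedy coloring from a degeneracy-type hypothesis -/
lemma colorable_of_degeneracy {V : Type*} [Fintype V] [DecidableEq V]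
    (G : SimpleGraph V) [DecidableRel G.Adj] (D : ℕ) (hD : 0 < D)
    (h : ∀ S : Finset V, S.Nonempty → ∃ v ∈ S,
      (S.filter (fun w => G.Adj v w)).card < D) : G.Colorable D := by
  classical
  have key : ∀ S : Finset V, ∃ c : V → Fin D,
      ∀ v ∈ S, ∀ w ∈ S, G.Adj v w → c v ≠ c w := by
    intro S
    induction S using Finset.strongInduction with
    | _ S ih =>
      rcases S.eq_empty_or_nonempty with rfl | hS
      · exact ⟨fun _ => ⟨0, hD⟩, by simp⟩
      · obtain ⟨v, hv, hdeg⟩ := h S hS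
        obtain ⟨c', hc'⟩ := ih (S.erase v) (Finset.erase_ssubset hv)
        set U : Finset (Fin D) := ((S.erase v).filter (fun w => G.Adj v w)).image c'
          with hU
        have hUcard : U.card < D := by
          calc U.card ≤ ((S.erase v).filter (fun w => G.Adj v w)).card :=
                Finset.card_image_le
            _ ≤ (S.filter (fun w => G.Adj v w)).card :=
                Finset.card_le_card (Finset.filter_subset_filter _ (Finset.erase_subset _ _))
            _ < D := hdeg
        have hcompl : (Uᶜ : Finset (Fin D)).Nonempty := by
          rw [← Finset.card_pos, Finset.card_compl]
          simp only [Fintype.card_fin]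
          omega
        obtain ⟨k, hk⟩ := hcompl
        rw [Finset.mem_compl] at hk
        refine ⟨Function.update c' v k, ?_⟩
        intro a ha b hb hab
        have hne : a ≠ b := G.ne_of_adj hab
        by_cases hav : a = v
        · have hbv : b ≠ v := fun hbv => hne (hav.trans hbv.symm)
          have hb' : b ∈ S.erase v := Finset.mem_erase.2 ⟨hbv, hb⟩
          have hadj : G.Adj v b := hav ▸ hab
          rw [hav, Function.update_self, Function.update_of_ne hbv]
          intro hkey
          exact hk (Finset.mem_image.2 ⟨b, Finset.mem_filter.2 ⟨hb', hadj⟩, hkey.symm⟩)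
        · by_cases hbv : b = v
          · have ha' : a ∈ S.erase v := Finset.mem_erase.2 ⟨hav, ha⟩
            have hadj : G.Adj v a := hbv ▸ hab.symm
            rw [hbv, Function.update_self, Function.update_of_ne hav]
            intro hkey
            exact hk (Finset.mem_image.2 ⟨a, Finset.mem_filter.2 ⟨ha', hadj⟩, hkey⟩)
          · rw [Function.update_of_ne hav, Function.update_of_ne hbv]
            exact hc' a (Finset.mem_erase.2 ⟨hav, ha⟩) b (Finset.mem_erase.2 ⟨hbv, hb⟩) hab
  obtain ⟨c, hc⟩ := key Finset.univ
  exact ⟨SimpleGraph.Coloring.mk c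
    (fun {a b} hab => hc a (Finset.mem_univ a) b (Finset.mem_univ b) hab)⟩

/-- configurations agreeing with `x` wherever `P` holds: at most `2^(#¬P)` many -/
lemma card_agree_le {n : ℕ} (P : Fin n → Prop) [DecidablePred P] (x : Conf n) :
    (Finset.univ.filter (fun x' : Conf n => ∀ j, P j → x' j = x j)).card ≤
      2 ^ (Finset.univ.filter (fun j => ¬ P j)).card := by
  classical
  have := Finset.card_le_card_of_injOn
    (f := fun (x' : Conf n) => fun (j : {j : Fin n // ¬ P j}) => x' j.1)
    (s := Finset.univ.filter (fun x' : Conf n => ∀ j, P j → x' j = x j))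
    (t := Finset.univ) ?_ ?_
  · calc _ ≤ (Finset.univ : Finset ({j : Fin n // ¬ P j} → Bool)).card := this
      _ = 2 ^ (Finset.univ.filter (fun j => ¬ P j)).card := by
        rw [Finset.card_univ, Fintype.card_fun, Fintype.card_subtype, Fintype.card_bool]
  · intro a _; exact Finset.mem_univ _
  · intro a ha b hb hab
    simp only [Finset.mem_coe, Finset.mem_filter] at ha hb
    funext j
    by_cases hj : P j
    · rw [ha.2 j hj, hb.2 j hj]
    · exact congrFun hab ⟨j, hj⟩

end Aux
section MainProof

open Finset

open scoped Classical in
lemma card_filter_lt_le (n a : ℕ) :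
    (Finset.univ.filter (fun j : Fin n => (j : ℕ) < a)).card ≤ a := by
  have := Finset.card_le_card_of_injOn (f := fun j : Fin n => (j : ℕ))
    (s := Finset.univ.filter (fun j : Fin n => (j : ℕ) < a)) (t := Finset.range a)
    (fun j hj => by simp at hj ⊢; omega)
    (fun j _ j' _ h => Fin.ext h)
  simpa using this

open scoped Classical in
lemma card_filter_gt_le (n a : ℕ) :
    (Finset.univ.filter (fun j : Fin n => ¬ (j : ℕ) ≤ a)).card ≤ n - a := by
  have := Finset.card_le_card_of_injOn (f := fun j : Fin n => (j : ℕ) - (a + 1))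
    (s := Finset.univ.filter (fun j : Fin n => ¬ (j : ℕ) ≤ a)) (t := Finset.range (n - a))
    (fun j hj => by simp at hj ⊢; omega)
    (fun j hj j' hj' h => by
      simp only [Finset.coe_filter, Set.mem_setOf_eq] at hj hj'
      have h' : (j : ℕ) - (a + 1) = (j' : ℕ) - (a + 1) := h
      exact Fin.ext (by omega))
  simpa using this

open scoped Classical in
lemma ginecc_deg_bound {n : ℕ} (F : Conf n → Conf n) (a : ℕ)
    (y : {y : Conf n // ∃ x, F x = y})
    (hp : (Finset.univ.filter (fun x => F x = y.1)).card ≤ 2 ^ a) :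
    (Finset.univ.filter (fun y' => (ginecc F (seqSched n)).Adj y y')).card ≤
      2 ^ (2 * a) + 2 ^ (n - a) := by
  set P := Finset.univ.filter (fun x => F x = y.1) with hP
  set A := P.biUnion (fun x =>
    Finset.univ.filter (fun x' : Conf n => ∀ j : Fin n, a ≤ (j : ℕ) → x' j = x j)) with hA
  set N1 := A.image (fun x' => (⟨F x', x', rfl⟩ : {y : Conf n // ∃ x, F x = y})) with hN1
  set N2 := Finset.univ.filter (fun y' : {y : Conf n // ∃ x, F x = y} =>
    y' ≠ y ∧ ∀ j : Fin n, (j : ℕ) ≤ a → y'.1 j = y.1 j) with hN2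
  have hsub : Finset.univ.filter (fun y' => (ginecc F (seqSched n)).Adj y y') ⊆ N1 ∪ N2 := by
    intro y' hy'
    rw [Finset.mem_filter] at hy'
    obtain ⟨x, x', hx, hx', hne, i, hi, heq⟩ := hy'.2
    rw [updSet_seq_eq_iff] at heq
    obtain ⟨h1, h2⟩ := heq
    rw [Finset.mem_union]
    by_cases hia : i ≤ a
    · left
      rw [hN1, Finset.mem_image]
      refine ⟨x', ?_, Subtype.ext hx'⟩
      rw [hA, Finset.mem_biUnion]
      refine ⟨x, by simp [hP, hx], ?_⟩
      simp only [Finset.mem_filter, Finset.mem_univ, true_and]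
      intro j hj
      exact (h2 j (by omega)).symm
    · right
      rw [hN2, Finset.mem_filter]
      refine ⟨Finset.mem_univ _, ?_, ?_⟩
      · intro hyy
        exact hne (by rw [hx, hx', hyy])
      · intro j hj
        rw [← hx, ← hx']
        exact (h1 j (by omega)).symm
  have hAcard : A.card ≤ 2 ^ (2 * a) := by
    have h1 : A.card ≤ ∑ x ∈ P, (Finset.univ.filter
        (fun x' : Conf n => ∀ j : Fin n, a ≤ (j : ℕ) → x' j = x j)).card :=
      Finset.card_biUnion_le
    have h2 : ∀ x ∈ P, (Finset.univ.filter
        (fun x' : Conf n => ∀ j : Fin n, a ≤ (j : ℕ) → x' j = x j)).card ≤ 2 ^ a := by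
      intro x _
      refine le_trans (card_agree_le (fun j => a ≤ (j : ℕ)) x) ?_
      refine Nat.pow_le_pow_right (by norm_num) ?_
      refine le_trans (le_of_eq ?_) (card_filter_lt_le n a)
      congr 1
      ext j
      simp [not_le]
    calc A.card ≤ ∑ x ∈ P, 2 ^ a := le_trans h1 (Finset.sum_le_sum h2)
      _ = P.card * 2 ^ a := by rw [Finset.sum_const, smul_eq_mul]
      _ ≤ 2 ^ a * 2 ^ a := by exact Nat.mul_le_mul_right _ hp
      _ = 2 ^ (2 * a) := by rw [← pow_add]; ring_nf
  have hN2card : N2.card ≤ 2 ^ (n - a) := by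
    have hinj : N2.card ≤ (Finset.univ.filter
        (fun z : Conf n => ∀ j : Fin n, (j : ℕ) ≤ a → z j = y.1 j)).card := by
      refine Finset.card_le_card_of_injOn (fun y' => y'.1) ?_ ?_
      · intro y' hy'
        rw [hN2, Finset.mem_coe, Finset.mem_filter] at hy'
        simp only [Finset.mem_coe, Finset.mem_filter, Finset.mem_univ, true_and]
        exact hy'.2.2
      · intro y1 _ y2 _ h
        exact Subtype.ext h
    refine le_trans hinj (le_trans (card_agree_le (fun j => (j : ℕ) ≤ a) y.1) ?_)
    exact Nat.pow_le_pow_right (by norm_num) (card_filter_gt_le n a)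
  calc (Finset.univ.filter (fun y' => (ginecc F (seqSched n)).Adj y y')).card
      ≤ (N1 ∪ N2).card := Finset.card_le_card hsub
    _ ≤ N1.card + N2.card := Finset.card_union_le _ _
    _ ≤ 2 ^ (2 * a) + 2 ^ (n - a) :=
        Nat.add_le_add (le_trans Finset.card_image_le hAcard) hN2card

end MainProof

theorem stmt7 {n : ℕ} (F : Conf n → Conf n) :
    (((ginecc F (seqSched n)).chromaticNumber.toNat : ℝ)) ≤
      (2 : ℝ) ^ (2 * (n : ℝ) / 3 + 2) := by
  classical
  set a := n / 3 with ha
  set D := 2 ^ (2 * a) + 2 ^ (n - a) + 1 with hD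
  -- colorability via degeneracy
  have hcol : (ginecc F (seqSched n)).Colorable D := by
    refine colorable_of_degeneracy _ _ (by positivity) ?_
    intro S hS
    by_cases hex : ∃ y ∈ S, (Finset.univ.filter (fun x => F x = y.1)).card ≤ 2 ^ a
    · obtain ⟨y, hy, hp⟩ := hex
      refine ⟨y, hy, ?_⟩
      have h1 : S.filter (fun w => (ginecc F (seqSched n)).Adj y w) ⊆
          Finset.univ.filter (fun w => (ginecc F (seqSched n)).Adj y w) := by
        intro w hw
        rw [Finset.mem_filter] at hw ⊢
        exact ⟨Finset.mem_univ _, hw.2⟩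
      have h2 := ginecc_deg_bound F a y hp
      have h3 := Finset.card_le_card h1
      -- different decidability instances may appear; use convert-free omega after aligning
      have h4 : (S.filter (fun w => (ginecc F (seqSched n)).Adj y w)).card ≤
          2 ^ (2 * a) + 2 ^ (n - a) := le_trans h3 (by convert h2 using 2)
      omega
    · push_neg at hex
      have hcard : S.card < 2 ^ (n - a) := by
        have hdisj : ∀ y ∈ S, ∀ y' ∈ S, y ≠ y' →
            Disjoint (Finset.univ.filter (fun x => F x = y.1))
              (Finset.univ.filter (fun x => F x = y'.1)) := by
          intro y _ y' _ hne
          rw [Finset.disjoint_left]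
          intro x hx hx'
          rw [Finset.mem_filter] at hx hx'
          exact hne (Subtype.ext (hx.2 ▸ hx'.2 ▸ rfl))
        have hsum : S.card * (2 ^ a + 1) ≤
            ∑ y ∈ S, (Finset.univ.filter (fun x => F x = y.1)).card := by
          have := Finset.card_nsmul_le_sum S
            (fun y => (Finset.univ.filter (fun x => F x = y.1)).card) (2 ^ a + 1)
            (fun y hy => Nat.succ_le_of_lt (hex y hy))
          simpa [smul_eq_mul] using this
        have hbi : ∑ y ∈ S, (Finset.univ.filter (fun x => F x = y.1)).card =
            (S.biUnion (fun y => Finset.univ.filter (fun x => F x = y.1))).card :=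
          (Finset.card_biUnion hdisj).symm
        have hle : (S.biUnion (fun y => Finset.univ.filter (fun x => F x = y.1))).card ≤ 2 ^ n := by
          refine le_trans (Finset.card_le_card (Finset.subset_univ _)) ?_
          simp [Finset.card_univ]
        have hn : 2 ^ n = 2 ^ a * 2 ^ (n - a) := by
          rw [← pow_add]
          congr 1
          omega
        have key : S.card * (2 ^ a + 1) ≤ 2 ^ a * 2 ^ (n - a) := by
          rw [← hn]; omega
        nlinarith [Nat.one_le_two_pow (n := n - a), Nat.one_le_two_pow (n := a), S.card.zero_le]
      obtain ⟨y, hy⟩ := hS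
      refine ⟨y, hy, ?_⟩
      have hssub : S.filter (fun w => (ginecc F (seqSched n)).Adj y w) ⊂ S := by
        refine ⟨Finset.filter_subset _ _, fun hsub => ?_⟩
        have := Finset.mem_filter.1 (hsub hy)
        exact (ginecc F (seqSched n)).loopless.irrefl y this.2
      have hlt := Finset.card_lt_card hssub
      refine lt_of_lt_of_le (lt_trans hlt hcard) ?_
      rw [hD]
      exact le_trans (Nat.le_add_left _ _) (Nat.le_succ _)
  -- chromatic number bound
  have h1 : (ginecc F (seqSched n)).chromaticNumber ≤ (D : ℕ∞) :=
    hcol.chromaticNumber_le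
  have h2 : (ginecc F (seqSched n)).chromaticNumber.toNat ≤ D := by
    have := ENat.toNat_le_toNat h1 (by simp)
    simpa using this
  have h3 : ((ginecc F (seqSched n)).chromaticNumber.toNat : ℝ) ≤ (D : ℝ) :=
    Nat.cast_le.2 h2
  refine le_trans h3 ?_
  -- real arithmetic
  have hfact1 : 3 * a ≤ n := by omega
  have hfact2 : n ≤ 3 * a + 2 := by omega
  have han : a ≤ n := by omega
  set R : ℝ := (2 : ℝ) ^ (2 * (n : ℝ) / 3) with hR
  have hRpos : (0 : ℝ) < R := Real.rpow_pos_of_pos (by norm_num) _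
  have hR1 : (1 : ℝ) ≤ R := Real.one_le_rpow (by norm_num) (by positivity)
  have e1 : ((2 : ℝ) ^ (2 * a : ℕ)) ≤ R := by
    rw [hR, ← Real.rpow_natCast 2 (2 * a)]
    refine Real.rpow_le_rpow_of_exponent_le (by norm_num) ?_
    push_cast
    have : (a : ℝ) * 3 ≤ (n : ℝ) := by exact_mod_cast by omega
    linarith
  have e2 : ((2 : ℝ) ^ (n - a : ℕ)) ≤ 2 * R := by
    have h2R : (2 : ℝ) * R = (2 : ℝ) ^ (2 * (n : ℝ) / 3 + 1) := by
      rw [hR, Real.rpow_add (by norm_num), Real.rpow_one]; ring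
    rw [h2R, ← Real.rpow_natCast 2 (n - a)]
    refine Real.rpow_le_rpow_of_exponent_le (by norm_num) ?_
    have hc : ((n - a : ℕ) : ℝ) = (n : ℝ) - (a : ℝ) := Nat.cast_sub han
    rw [hc]
    have h1 : (n : ℝ) ≤ 3 * (a : ℝ) + 2 := by exact_mod_cast hfact2
    linarith
  have hRHS : (2 : ℝ) ^ (2 * (n : ℝ) / 3 + 2) = 4 * R := by
    rw [hR, Real.rpow_add (by norm_num)]
    have : (2 : ℝ) ^ (2 : ℝ) = 4 := by
      rw [show (2 : ℝ) = ((2 : ℕ) : ℝ) by norm_num, Real.rpow_natCast]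
      norm_num
    rw [this]; ring
  rw [hRHS, hD]
  push_cast
  linarith
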